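/- If B is less noisy than E with respect to source A (i.e., I(U;E) ≤ I(U;B) for every U with U − A − (B,E) a Markov chain), then for every such U, I(A;B|U) − I(A;E|U) ≤ I(A;B) − I(A;E). -/
import Mathlib


open Finset

/-- `w` is a probability mass function on the finite sample space `Ω`. -/
def IsPMF {Ω : Type} [Fintype Ω] (w : Ω → ℝ) : Prop :=
  (∀ ω, 0 ≤ w ω) ∧ ∑ ω, w ω = 1

open scoped Classical in
/-- Probability that the random variable `X` takes the value `x`. -/
noncomputable def pr {Ω : Type} [Fintype Ω] (w : Ω → ℝ) {α : Type} (X : Ω → α) (x : α) : ℝ :=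
  ∑ ω, if X ω = x then w ω else 0

/-- Shannon entropy (in bits) of the random variable `X`. -/
noncomputable def H {Ω : Type} [Fintype Ω] (w : Ω → ℝ) {α : Type} [Fintype α] (X : Ω → α) : ℝ :=
  -∑ x, pr w X x * Real.logb 2 (pr w X x)

/-- Conditional entropy `H(X|Y)`. -/
noncomputable def condH {Ω : Type} [Fintype Ω] (w : Ω → ℝ) {α β : Type} [Fintype α] [Fintype β]
    (X : Ω → α) (Y : Ω → β) : ℝ :=
  H w (fun ω => (X ω, Y ω)) - H w Y

/-- Mutual information `I(X;Y)`. -/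
noncomputable def MI {Ω : Type} [Fintype Ω] (w : Ω → ℝ) {α β : Type} [Fintype α] [Fintype β]
    (X : Ω → α) (Y : Ω → β) : ℝ :=
  H w X + H w Y - H w (fun ω => (X ω, Y ω))

/-- Conditional mutual information `I(X;Y|Z)`. -/
noncomputable def cMI {Ω : Type} [Fintype Ω] (w : Ω → ℝ) {α β γ : Type}
    [Fintype α] [Fintype β] [Fintype γ] (X : Ω → α) (Y : Ω → β) (Z : Ω → γ) : ℝ :=
  condH w X Z - condH w X (fun ω => (Y ω, Z ω))

/-- `X` and `Y` are conditionally independent given `Z`, i.e. the Markov chain `X − Z − Y`. -/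
def CondIndep {Ω : Type} [Fintype Ω] (w : Ω → ℝ) {α β γ : Type}
    (X : Ω → α) (Y : Ω → β) (Z : Ω → γ) : Prop :=
  ∀ x y z, pr w (fun ω => (X ω, Y ω, Z ω)) (x, y, z) * pr w Z z =
    pr w (fun ω => (X ω, Z ω)) (x, z) * pr w (fun ω => (Y ω, Z ω)) (y, z)

set_option linter.unusedSectionVars false

section lemmas
variable {Ω : Type} [Fintype Ω] (w : Ω → ℝ)

lemma pr_nonneg (hw : ∀ ω, 0 ≤ w ω) {α : Type} (X : Ω → α) (x : α) : 0 ≤ pr w X x := by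
  classical
  refine Finset.sum_nonneg fun ω _ => ?_
  split <;> simp [hw ω]

lemma pr_comp {α α' : Type} (f : α → α') (hf : Function.Injective f)
    (X : Ω → α) (x : α) : pr w (fun ω => f (X ω)) (f x) = pr w X x := by
  classical
  unfold pr
  refine Finset.sum_congr rfl fun ω _ => ?_
  simp [hf.eq_iff]

lemma pr_marg {α β : Type} [Fintype β] (X : Ω → α) (Y : Ω → β) (x : α) :
    pr w X x = ∑ y, pr w (fun ω => (X ω, Y ω)) (x, y) := by
  classical
  unfold pr
  rw [Finset.sum_comm]
  refine Finset.sum_congr rfl fun ω _ => ?_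
  by_cases h : X ω = x <;> simp [h, Prod.ext_iff, Finset.sum_ite_eq]

lemma H_comp {α α' : Type} [Fintype α] [Fintype α'] (f : α → α') (hf : Function.Injective f)
    (X : Ω → α) : H w (fun ω => f (X ω)) = H w X := by
  classical
  unfold H
  congr 1
  rw [← Finset.sum_subset (Finset.subset_univ (Finset.univ.image f))]
  · rw [Finset.sum_image (fun x _ y _ h => hf h)]
    refine Finset.sum_congr rfl fun x _ => ?_
    rw [pr_comp w f hf]
  · intro y _ hy
    have : pr w (fun ω => f (X ω)) y = 0 := by
      unfold pr
      refine Finset.sum_eq_zero fun ω _ => ?_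
      have : f (X ω) ≠ y := fun h => hy (h ▸ Finset.mem_image_of_mem f (Finset.mem_univ _))
      simp [this]
    simp [this]

variable {κ β γ α : Type} [Fintype κ] [Fintype β] [Fintype γ] [Fintype α]
variable (U : Ω → κ) (B : Ω → β) (E : Ω → γ) (A : Ω → α)

lemma margUA (u : κ) (a : α) :
    pr w (fun ω => (U ω, A ω)) (u, a) = ∑ b, pr w (fun ω => (U ω, B ω, A ω)) (u, b, a) := by
  rw [pr_marg w (fun ω => (U ω, A ω)) B (u, a)]
  refine Finset.sum_congr rfl fun b _ => ?_
  have hf : Function.Injective (fun p : (κ × α) × β => (p.1.1, p.2, p.1.2)) := by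
    intro p q h; simp [Prod.ext_iff] at h ⊢; tauto
  exact (pr_comp w _ hf (fun ω => ((U ω, A ω), B ω)) ((u, a), b)).symm

lemma margBA (b : β) (a : α) :
    pr w (fun ω => (B ω, A ω)) (b, a) = ∑ u, pr w (fun ω => (U ω, B ω, A ω)) (u, b, a) := by
  rw [pr_marg w (fun ω => (B ω, A ω)) U (b, a)]
  refine Finset.sum_congr rfl fun u _ => ?_
  have hf : Function.Injective (fun p : (β × α) × κ => (p.2, p.1.1, p.1.2)) := by
    intro p q h; simp [Prod.ext_iff] at h ⊢; tauto
  exact (pr_comp w _ hf (fun ω => ((B ω, A ω), U ω)) ((b, a), u)).symm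

lemma margA (a : α) :
    pr w A a = ∑ u, ∑ b, pr w (fun ω => (U ω, B ω, A ω)) (u, b, a) := by
  rw [pr_marg w A U a]
  refine Finset.sum_congr rfl fun u _ => ?_
  have : pr w (fun ω => (A ω, U ω)) (a, u) = pr w (fun ω => (U ω, A ω)) (u, a) := by
    have hf : Function.Injective (fun p : κ × α => (p.2, p.1)) := by
      intro p q h; simp [Prod.ext_iff] at h ⊢; tauto
    exact pr_comp w _ hf (fun ω => (U ω, A ω)) (u, a)
  rw [this, margUA w U B A u a]

lemma cMI_zero (hw : IsPMF w) (h : CondIndep w U B A) : cMI w U B A = 0 := by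
  classical
  set q : κ → β → α → ℝ := fun u b a => pr w (fun ω => (U ω, B ω, A ω)) (u, b, a) with hq
  have hq0 : ∀ u b a, 0 ≤ q u b a := fun u b a => pr_nonneg w hw.1 _ _
  set PUA : κ → α → ℝ := fun u a => ∑ b, q u b a with hPUA
  set PBA : β → α → ℝ := fun b a => ∑ u, q u b a with hPBA
  set PA : α → ℝ := fun a => ∑ u, ∑ b, q u b a with hPA
  have key : ∀ u b a, q u b a * PA a = PUA u a * PBA b a := by
    intro u b a
    have := h u b a
    rw [margUA w U B A u a, margBA w U B A b a, margA w U B A a] at this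
    exact this
  have hPUA0 : ∀ u a, 0 ≤ PUA u a := fun u a => Finset.sum_nonneg fun b _ => hq0 u b a
  have hPBA0 : ∀ b a, 0 ≤ PBA b a := fun b a => Finset.sum_nonneg fun u _ => hq0 u b a
  have hPA0 : ∀ a, 0 ≤ PA a := fun a => Finset.sum_nonneg fun u _ => hPUA0 u a
  have term : ∀ u b a, q u b a * Real.logb 2 (q u b a) =
      q u b a * Real.logb 2 (PUA u a) + q u b a * Real.logb 2 (PBA b a)
        - q u b a * Real.logb 2 (PA a) := by
    intro u b a
    rcases eq_or_lt_of_le (hq0 u b a) with hz | hpos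
    · rw [← hz]; ring
    · have hua : 0 < PUA u a :=
        lt_of_lt_of_le hpos (Finset.single_le_sum (fun b _ => hq0 u b a) (Finset.mem_univ b))
      have hba : 0 < PBA b a :=
        lt_of_lt_of_le hpos (Finset.single_le_sum (fun u _ => hq0 u b a) (Finset.mem_univ u))
      have ha : 0 < PA a :=
        lt_of_lt_of_le hua (Finset.single_le_sum (fun u _ => hPUA0 u a) (Finset.mem_univ u))
      have hqval : q u b a = PUA u a * PBA b a / PA a := by
        field_simp
        exact key u b a
      rw [hqval, Real.logb_div (by positivity) ha.ne', Real.logb_mul hua.ne' hba.ne']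
      ring
  -- main entropy identity
  have main : H w (fun ω => (U ω, B ω, A ω)) =
      H w (fun ω => (U ω, A ω)) + H w (fun ω => (B ω, A ω)) - H w A := by
    unfold H
    have e1 : ∑ x : κ × β × α, pr w (fun ω => (U ω, B ω, A ω)) x
        * Real.logb 2 (pr w (fun ω => (U ω, B ω, A ω)) x)
        = ∑ u, ∑ b, ∑ a, q u b a * Real.logb 2 (q u b a) := by
      rw [Fintype.sum_prod_type]
      exact Finset.sum_congr rfl fun u _ => by rw [Fintype.sum_prod_type]
    have e2 : ∑ x : κ × α, pr w (fun ω => (U ω, A ω)) x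
        * Real.logb 2 (pr w (fun ω => (U ω, A ω)) x)
        = ∑ u, ∑ a, PUA u a * Real.logb 2 (PUA u a) := by
      rw [Fintype.sum_prod_type]
      exact Finset.sum_congr rfl fun u _ => Finset.sum_congr rfl fun a _ => by
        rw [margUA w U B A u a]
    have e3 : ∑ x : β × α, pr w (fun ω => (B ω, A ω)) x
        * Real.logb 2 (pr w (fun ω => (B ω, A ω)) x)
        = ∑ b, ∑ a, PBA b a * Real.logb 2 (PBA b a) := by
      rw [Fintype.sum_prod_type]
      exact Finset.sum_congr rfl fun b _ => Finset.sum_congr rfl fun a _ => by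
        rw [margBA w U B A b a]
    have e4 : ∑ a, pr w A a * Real.logb 2 (pr w A a)
        = ∑ a, PA a * Real.logb 2 (PA a) := by
      refine Finset.sum_congr rfl fun a _ => by rw [margA w U B A a]
    rw [e1, e2, e3, e4]
    have s1 : ∑ u, ∑ b, ∑ a, q u b a * Real.logb 2 (PUA u a)
        = ∑ u, ∑ a, PUA u a * Real.logb 2 (PUA u a) := by
      refine Finset.sum_congr rfl fun u _ => ?_
      rw [Finset.sum_comm]
      exact Finset.sum_congr rfl fun a _ => by rw [← Finset.sum_mul]
    have s2 : ∑ u, ∑ b, ∑ a, q u b a * Real.logb 2 (PBA b a)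
        = ∑ b, ∑ a, PBA b a * Real.logb 2 (PBA b a) := by
      rw [Finset.sum_comm]
      refine Finset.sum_congr rfl fun b _ => ?_
      rw [Finset.sum_comm]
      exact Finset.sum_congr rfl fun a _ => by rw [← Finset.sum_mul]
    have s3 : ∑ u, ∑ b, ∑ a, q u b a * Real.logb 2 (PA a)
        = ∑ a, PA a * Real.logb 2 (PA a) := by
      have h1 : ∀ u, ∑ b, ∑ a, q u b a * Real.logb 2 (PA a)
          = ∑ a, (∑ b, q u b a) * Real.logb 2 (PA a) := fun u => by
        rw [Finset.sum_comm]
        exact Finset.sum_congr rfl fun a _ => by rw [← Finset.sum_mul]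
      rw [Finset.sum_congr rfl (fun u _ => h1 u), Finset.sum_comm]
      exact Finset.sum_congr rfl fun a _ => by rw [← Finset.sum_mul]
    have expand : ∑ u, ∑ b, ∑ a, q u b a * Real.logb 2 (q u b a)
        = (∑ u, ∑ b, ∑ a, q u b a * Real.logb 2 (PUA u a))
          + (∑ u, ∑ b, ∑ a, q u b a * Real.logb 2 (PBA b a))
          - (∑ u, ∑ b, ∑ a, q u b a * Real.logb 2 (PA a)) := by
      rw [Finset.sum_congr rfl (fun u _ => Finset.sum_congr rfl fun b _ =>
        Finset.sum_congr rfl fun a _ => term u b a)]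
      simp [Finset.sum_add_distrib, Finset.sum_sub_distrib]
    rw [expand, s1, s2, s3]
    ring
  unfold cMI condH
  linarith [main]

lemma condIndep_fst (h : CondIndep w U (fun ω => (B ω, E ω)) A) : CondIndep w U B A := by
  intro u b a
  have hm1 : pr w (fun ω => (U ω, B ω, A ω)) (u, b, a)
      = ∑ e, pr w (fun ω => (U ω, (B ω, E ω), A ω)) (u, (b, e), a) := by
    rw [pr_marg w (fun ω => (U ω, B ω, A ω)) E (u, b, a)]
    refine Finset.sum_congr rfl fun e _ => ?_
    have hf : Function.Injective (fun p : (κ × β × α) × γ => (p.1.1, (p.1.2.1, p.2), p.1.2.2)) := by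
      intro p q hpq; simp [Prod.ext_iff] at hpq ⊢; tauto
    exact (pr_comp w _ hf (fun ω => ((U ω, B ω, A ω), E ω)) ((u, b, a), e)).symm
  have hm2 : pr w (fun ω => (B ω, A ω)) (b, a)
      = ∑ e, pr w (fun ω => ((B ω, E ω), A ω)) ((b, e), a) := by
    rw [pr_marg w (fun ω => (B ω, A ω)) E (b, a)]
    refine Finset.sum_congr rfl fun e _ => ?_
    have hf : Function.Injective (fun p : (β × α) × γ => ((p.1.1, p.2), p.1.2)) := by
      intro p q hpq; simp [Prod.ext_iff] at hpq ⊢; tauto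
    exact (pr_comp w _ hf (fun ω => ((B ω, A ω), E ω)) ((b, a), e)).symm
  rw [hm1, hm2, Finset.sum_mul, Finset.mul_sum]
  exact Finset.sum_congr rfl fun e _ => h u (b, e) a

lemma condIndep_snd (h : CondIndep w U (fun ω => (B ω, E ω)) A) : CondIndep w U E A := by
  intro u e a
  have hm1 : pr w (fun ω => (U ω, E ω, A ω)) (u, e, a)
      = ∑ b, pr w (fun ω => (U ω, (B ω, E ω), A ω)) (u, (b, e), a) := by
    rw [pr_marg w (fun ω => (U ω, E ω, A ω)) B (u, e, a)]
    refine Finset.sum_congr rfl fun b _ => ?_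
    have hf : Function.Injective (fun p : (κ × γ × α) × β => (p.1.1, (p.2, p.1.2.1), p.1.2.2)) := by
      intro p q hpq; simp [Prod.ext_iff] at hpq ⊢; tauto
    exact (pr_comp w _ hf (fun ω => ((U ω, E ω, A ω), B ω)) ((u, e, a), b)).symm
  have hm2 : pr w (fun ω => (E ω, A ω)) (e, a)
      = ∑ b, pr w (fun ω => ((B ω, E ω), A ω)) ((b, e), a) := by
    rw [pr_marg w (fun ω => (E ω, A ω)) B (e, a)]
    refine Finset.sum_congr rfl fun b _ => ?_
    have hf : Function.Injective (fun p : (γ × α) × β => ((p.2, p.1.1), p.1.2)) := by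
      intro p q hpq; simp [Prod.ext_iff] at hpq ⊢; tauto
    exact (pr_comp w _ hf (fun ω => ((E ω, A ω), B ω)) ((e, a), b)).symm
  rw [hm1, hm2, Finset.sum_mul, Finset.mul_sum]
  exact Finset.sum_congr rfl fun b _ => h u (b, e) a

lemma key_identity :
    MI w A B - cMI w A B U = MI w U B - cMI w U B A := by
  have h1 : H w (fun ω => (A ω, B ω)) = H w (fun ω => (B ω, A ω)) := by
    have hf : Function.Injective (fun p : β × α => (p.2, p.1)) := by
      intro p q hpq; simp [Prod.ext_iff] at hpq ⊢; tauto
    exact H_comp w _ hf (fun ω => (B ω, A ω))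
  have h2 : H w (fun ω => (A ω, U ω)) = H w (fun ω => (U ω, A ω)) := by
    have hf : Function.Injective (fun p : κ × α => (p.2, p.1)) := by
      intro p q hpq; simp [Prod.ext_iff] at hpq ⊢; tauto
    exact H_comp w _ hf (fun ω => (U ω, A ω))
  have h3 : H w (fun ω => (B ω, U ω)) = H w (fun ω => (U ω, B ω)) := by
    have hf : Function.Injective (fun p : κ × β => (p.2, p.1)) := by
      intro p q hpq; simp [Prod.ext_iff] at hpq ⊢; tauto
    exact H_comp w _ hf (fun ω => (U ω, B ω))
  have h4 : H w (fun ω => (A ω, B ω, U ω)) = H w (fun ω => (U ω, B ω, A ω)) := by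
    have hf : Function.Injective (fun p : κ × β × α => (p.2.2, p.2.1, p.1)) := by
      intro p q hpq; simp [Prod.ext_iff] at hpq ⊢; tauto
    exact H_comp w _ hf (fun ω => (U ω, B ω, A ω))
  unfold MI cMI condH
  linarith [h1, h2, h3, h4]

end lemmas

theorem stmt1 {Ω α β γ : Type} [Fintype Ω] [Fintype α] [Fintype β] [Fintype γ]
    (w : Ω → ℝ) (hw : IsPMF w) (A : Ω → α) (B : Ω → β) (E : Ω → γ)
    (hLessNoisy : ∀ (κ : Type) [Fintype κ] (U : Ω → κ),
      CondIndep w U (fun ω => (B ω, E ω)) A → MI w U E ≤ MI w U B) :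
    ∀ (κ : Type) [Fintype κ] (U : Ω → κ), CondIndep w U (fun ω => (B ω, E ω)) A →
      cMI w A B U - cMI w A E U ≤ MI w A B - MI w A E := by
  intro κ _ U hU
  have hB0 : cMI w U B A = 0 := cMI_zero w U B A hw (condIndep_fst w U B E A hU)
  have hE0 : cMI w U E A = 0 := cMI_zero w U E A hw (condIndep_snd w U B E A hU)
  have hIB := key_identity w U B A
  have hIE := key_identity w U E A
  have hle := hLessNoisy κ U hU
  linarith
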